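/- Let φ : {0,…,m+1} → ℝ satisfy ghost-cell Neumann conditions φ_0 = φ_1 and φ_{m+1} = φ_m. With the quadratic face average A^{(q)}(φ²)_{i+1/2} = (φ_{i+1}² + φ_{i+1}φ_i + φ_i²)/3 and discrete operators D, d as above, the exact discrete identity h Σ_{i=1}^m φ_i³ (Δ_hφ)_i = -3h Σ_{i=1}^{m-1} A^{(q)}(φ²)_{i+1/2} ((φ_{i+1}-φ_i)/h)² holds. -/

import Mathlib

lemma sbp_general (φ : ℕ → ℝ) : ∀ m : ℕ, 0 < m →
    ∑ i ∈ Finset.Icc 1 m, φ i ^ 3 * (φ (i + 1) - 2 * φ i + φ (i - 1))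
      = φ m ^ 3 * (φ (m + 1) - φ m) - φ 1 ^ 3 * (φ 1 - φ 0)
        - ∑ i ∈ Finset.Icc 1 (m - 1), (φ (i + 1) ^ 3 - φ i ^ 3) * (φ (i + 1) - φ i) := by
  intro m hm
  induction m with
  | zero => omega
  | succ n ih =>
    rcases Nat.eq_zero_or_pos n with hn | hn
    · subst hn; simp; ring
    · rw [show n + 1 - 1 = (n - 1) + 1 by omega,
        Finset.sum_Icc_succ_top (by omega : 1 ≤ n + 1),
        Finset.sum_Icc_succ_top (by omega : 1 ≤ (n - 1) + 1), ih hn,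
        show (n - 1) + 1 = n by omega]
      have : n + 1 - 1 = n := by omega
      rw [this]
      ring

/-- Discrete analogue of `∫ φ³ Δφ = -3 ∫ φ² |∇φ|²`: for `φ` satisfying the
ghost-cell Neumann conditions `φ_0 = φ_1`, `φ_{m+1} = φ_m`, with the quadratic
face average `A^{(q)}(φ²)_{i+1/2} = (φ_{i+1}² + φ_{i+1}φ_i + φ_i²)/3` and the
cell-centered Laplacian `(Δ_hφ)_i = (φ_{i+1} - 2φ_i + φ_{i-1})/h²`, one has
`h Σ_{i=1}^m φ_i³ (Δ_hφ)_i = -3h Σ_{i=1}^{m-1} A^{(q)}(φ²)_{i+1/2} ((φ_{i+1}-φ_i)/h)²`. -/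
theorem discrete_cubic_sbp_identity
    (h : ℝ) (hh : 0 < h) (m : ℕ) (hm : 0 < m)
    (φ : ℕ → ℝ) (hφ0 : φ 0 = φ 1) (hφm : φ (m + 1) = φ m) :
    h * ∑ i ∈ Finset.Icc 1 m, φ i ^ 3 * ((φ (i + 1) - 2 * φ i + φ (i - 1)) / h ^ 2)
      = -3 * h * ∑ i ∈ Finset.Icc 1 (m - 1),
          ((φ (i + 1) ^ 2 + φ (i + 1) * φ i + φ i ^ 2) / 3)
            * ((φ (i + 1) - φ i) / h) ^ 2 := by
  have key := sbp_general φ m hm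
  rw [hφ0, hφm] at key
  have hne : h ≠ 0 := ne_of_gt hh
  have e1 : ∀ i : ℕ, φ i ^ 3 * ((φ (i + 1) - 2 * φ i + φ (i - 1)) / h ^ 2)
      = (1 / h ^ 2) * (φ i ^ 3 * (φ (i + 1) - 2 * φ i + φ (i - 1))) := by
    intro i; field_simp
  have e2 : ∀ i : ℕ, ((φ (i + 1) ^ 2 + φ (i + 1) * φ i + φ i ^ 2) / 3)
        * ((φ (i + 1) - φ i) / h) ^ 2
      = (1 / (3 * h ^ 2)) * ((φ (i + 1) ^ 3 - φ i ^ 3) * (φ (i + 1) - φ i)) := by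
    intro i; field_simp; ring
  simp only [e1, e2, ← Finset.mul_sum, key]
  field_simp
  ring
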